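/- Let $R$ be a UFD, $p \in R$ an irreducible element, $I$ an ideal of $R$, and $n \in \mathbb{N}$. Then $I$ is an $n$-absorbing ideal of $R$ if and only if $pI$ is an $(n+1)$-absorbing ideal of $R$. -/

import Mathlib

open Ideal Finset MvPolynomial

/-- `I` is an `N`-absorbing ideal: whenever a product of `N+1` elements lies in `I`,
the product of some `N` of them (omitting one factor) lies in `I`. -/
def IsNAbsorbing {R : Type*} [CommRing R] (I : Ideal R) (N : ℕ) : Prop :=
  ∀ x : Fin (N + 1) → R, (∏ i, x i) ∈ I →
    ∃ j, (∏ i ∈ Finset.univ.erase j, x i) ∈ I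

/-- `ω(I)`: the least `N` such that `I` is `N`-absorbing. -/
noncomputable def omegaAbs {R : Type*} [CommRing R] (I : Ideal R) : ℕ :=
  sInf {N | IsNAbsorbing I N}

section Aux

lemma erase_univ_eq_image_succAbove {N : ℕ} (j : Fin (N + 1)) :
    (Finset.univ.erase j : Finset (Fin (N + 1))) = Finset.image j.succAbove Finset.univ := by
  ext k
  simp only [Finset.mem_erase, Finset.mem_univ, and_true, Finset.mem_image, true_and]
  constructor
  · intro hk
    exact Fin.exists_succAbove_eq hk
  · rintro ⟨i, rfl⟩
    exact Fin.succAbove_ne j i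

lemma prod_erase_eq_succAbove {M : Type*} [CommMonoid M] {N : ℕ} (j : Fin (N + 1))
    (f : Fin (N + 1) → M) :
    ∏ i ∈ Finset.univ.erase j, f i = ∏ i : Fin N, f (j.succAbove i) := by
  rw [erase_univ_eq_image_succAbove, Finset.prod_image
    (fun a _ b _ h => Fin.succAbove_right_injective h)]

lemma prod_erase_erase_succAbove {M : Type*} [CommMonoid M] {N : ℕ} (j : Fin (N + 1))
    (m : Fin N) (f : Fin (N + 1) → M) :
    ∏ i ∈ (Finset.univ.erase j).erase (j.succAbove m), f i
      = ∏ i ∈ Finset.univ.erase m, f (j.succAbove i) := by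
  rw [erase_univ_eq_image_succAbove, ← Finset.image_erase
    (fun a b h => Fin.succAbove_right_injective h),
    Finset.prod_image (fun a _ b _ h => Fin.succAbove_right_injective h)]

variable {R : Type*} [CommRing R] [IsDomain R] {p : R} (hp : Irreducible p) {I : Ideal R}

include hp in
lemma cancel_p_mem {a : R} (h : p * a ∈ Ideal.span {p} * I) : a ∈ I := by
  rw [Ideal.mem_span_singleton_mul] at h
  obtain ⟨z, hz, hza⟩ := h
  rwa [← mul_left_cancel₀ hp.ne_zero hza]

lemma mem_p_mul {a : R} (h : a ∈ I) : p * a ∈ Ideal.span {p} * I :=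
  Ideal.mul_mem_mul (Ideal.mem_span_singleton_self p) h

include hp in
/-- descent on the power of `p` dividing the product -/
lemma absorbing_descent [UniqueFactorizationMonoid R] {n : ℕ}
    (hpI : IsNAbsorbing (Ideal.span {p} * I) (n + 1)) :
    ∀ (k : ℕ) (x : Fin (n + 1) → R), (∏ i, x i) ∈ I → ¬ p ^ k ∣ ∏ i, x i →
      ∃ j, (∏ i ∈ Finset.univ.erase j, x i) ∈ I := by
  have hprime : Prime p := hp.prime
  intro k
  induction k with
  | zero => intro x _ h; exact absurd (by simpa using one_dvd (∏ i, x i)) h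
  | succ k ih =>
    intro x hx hk
    have h1 : ∏ i, (Fin.cons p x : Fin (n + 2) → R) i ∈ Ideal.span {p} * I := by
      rw [Fin.prod_univ_succ]
      exact mem_p_mul (by simpa using hx)
    obtain ⟨J, hJ⟩ := hpI _ h1
    by_cases hJ0 : J = 0
    · subst hJ0
      have e0 : ∏ i ∈ Finset.univ.erase (0 : Fin (n + 2)), (Fin.cons p x : Fin (n + 2) → R) i
          = ∏ i, x i := by
        rw [prod_erase_eq_succAbove]
        simp [Fin.succAbove_zero]
      rw [e0] at hJ
      obtain ⟨u, huI, hu⟩ := Ideal.mem_span_singleton_mul.mp hJ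
      have hdvd : p ∣ ∏ i, x i := ⟨u, hu.symm⟩
      obtain ⟨j, -, hpj⟩ := hprime.exists_mem_finset_dvd hdvd
      obtain ⟨y, hy⟩ := hpj
      set x' := Function.update x j y with hx'def
      have e1 : ∏ i, x i = p * ∏ i, x' i := by
        rw [hx'def, Finset.prod_update_of_mem (Finset.mem_univ j),
          Finset.sdiff_singleton_eq_erase,
          ← Finset.mul_prod_erase Finset.univ x (Finset.mem_univ j), hy]
        ring
      have hx'I : ∏ i, x' i ∈ I := by
        have : u = ∏ i, x' i := mul_left_cancel₀ hp.ne_zero (hu.trans e1)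
        rwa [← this]
      have hk' : ¬ p ^ k ∣ ∏ i, x' i := by
        intro h
        exact hk (by rw [e1, pow_succ']; exact mul_dvd_mul_left p h)
      obtain ⟨j₂, hj₂⟩ := ih x' hx'I hk'
      by_cases hjj : j₂ = j
      · subst hjj
        refine ⟨j₂, ?_⟩
        rwa [Finset.prod_congr rfl (fun i hi =>
          Function.update_of_ne (Finset.mem_erase.mp hi).1 _ x)] at hj₂
      · refine ⟨j₂, ?_⟩
        have hjmem : j ∈ Finset.univ.erase j₂ :=
          Finset.mem_erase.mpr ⟨Ne.symm hjj, Finset.mem_univ _⟩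
        rw [← Finset.mul_prod_erase _ x hjmem, hy]
        have e2 : ∏ i ∈ Finset.univ.erase j₂, x' i
            = y * ∏ i ∈ (Finset.univ.erase j₂).erase j, x i := by
          rw [← Finset.mul_prod_erase _ x' hjmem]
          congr 1
          · simp [hx'def]
          · exact Finset.prod_congr rfl (fun i hi =>
              Function.update_of_ne (Finset.mem_erase.mp hi).1 _ x)
        rw [e2] at hj₂
        have := I.mul_mem_left p hj₂
        rwa [← mul_assoc] at this
    · obtain ⟨m, rfl⟩ := Fin.exists_succ_eq.mpr hJ0
      refine ⟨m, ?_⟩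
      have h0 : (0 : Fin (n + 2)) ∈ Finset.univ.erase m.succ :=
        Finset.mem_erase.mpr ⟨(Fin.succ_ne_zero m).symm, Finset.mem_univ _⟩
      rw [← Finset.mul_prod_erase _ _ h0] at hJ
      have e2 : ∏ i ∈ (Finset.univ.erase m.succ).erase (0 : Fin (n + 2)),
          (Fin.cons p x : Fin (n + 2) → R) i = ∏ i ∈ Finset.univ.erase m, x i := by
        rw [Finset.erase_right_comm, ← Fin.succAbove_zero,
          prod_erase_erase_succAbove (0 : Fin (n + 2)) m]
        simp [Fin.succAbove_zero]
      rw [e2, Fin.cons_zero] at hJ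
      exact cancel_p_mem hp hJ

end Aux

theorem nAbsorbing_iff_mul_irreducible {R : Type*} [CommRing R] [IsDomain R]
    [UniqueFactorizationMonoid R] (p : R) (hp : Irreducible p) (I : Ideal R)
    (n : ℕ) (hn : 1 ≤ n) :
    IsNAbsorbing I n ↔ IsNAbsorbing (Ideal.span {p} * I) (n + 1) := by
  have hprime : Prime p := hp.prime
  constructor
  · intro hI x hx
    obtain ⟨u, huI, hu⟩ := Ideal.mem_span_singleton_mul.mp hx
    have hdvd : p ∣ ∏ i, x i := ⟨u, hu.symm⟩
    obtain ⟨j, -, hpj⟩ := hprime.exists_mem_finset_dvd hdvd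
    obtain ⟨y, hy⟩ := hpj
    set g : Fin (n + 1) → R := x ∘ j.succAbove with hgdef
    have h1 : ∏ i, x i = p * (y * ∏ i, g i) := by
      rw [Fin.prod_univ_succAbove x j, hy]; exact mul_assoc p y _
    have h2 : y * ∏ i, g i ∈ I := by
      have : u = y * ∏ i, g i := mul_left_cancel₀ hp.ne_zero (hu.trans h1)
      rwa [← this]
    set z : Fin (n + 1) → R := Function.update g 0 (y * g 0) with hzdef
    have h3 : ∏ i, z i ∈ I := by
      have : ∏ i, z i = y * ∏ i, g i := by
        rw [hzdef, Finset.prod_update_of_mem (Finset.mem_univ 0),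
          Finset.sdiff_singleton_eq_erase,
          ← Finset.mul_prod_erase Finset.univ g (Finset.mem_univ 0)]
        ring
      rwa [this]
    obtain ⟨j', hj'⟩ := hI z h3
    have key : y * ∏ i ∈ Finset.univ.erase j', g i ∈ I := by
      by_cases h0 : j' = 0
      · subst h0
        have : ∏ i ∈ Finset.univ.erase (0 : Fin (n + 1)), z i
            = ∏ i ∈ Finset.univ.erase (0 : Fin (n + 1)), g i :=
          Finset.prod_congr rfl (fun i hi =>
            Function.update_of_ne (Finset.mem_erase.mp hi).1 _ g)
        rw [this] at hj'
        exact I.mul_mem_left y hj'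
      · have h0' : (0 : Fin (n + 1)) ∈ Finset.univ.erase j' :=
          Finset.mem_erase.mpr ⟨Ne.symm h0, Finset.mem_univ _⟩
        have e : ∏ i ∈ Finset.univ.erase j', z i
            = y * ∏ i ∈ Finset.univ.erase j', g i := by
          rw [← Finset.mul_prod_erase _ z h0', ← Finset.mul_prod_erase _ g h0']
          have hz0 : z 0 = y * g 0 := by simp [hzdef]
          have hrest : ∏ i ∈ (Finset.univ.erase j').erase (0 : Fin (n + 1)), z i
              = ∏ i ∈ (Finset.univ.erase j').erase (0 : Fin (n + 1)), g i :=
            Finset.prod_congr rfl (fun i hi =>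
              Function.update_of_ne (Finset.mem_erase.mp hi).1 _ g)
          rw [hz0, hrest]; ring
        rw [e] at hj'
        exact hj'
    refine ⟨j.succAbove j', ?_⟩
    have hjmem : j ∈ Finset.univ.erase (j.succAbove j') :=
      Finset.mem_erase.mpr ⟨(Fin.succAbove_ne j j').symm, Finset.mem_univ _⟩
    rw [← Finset.mul_prod_erase _ x hjmem, Finset.erase_right_comm,
      prod_erase_erase_succAbove j j' x, hy, mul_assoc]
    exact mem_p_mul key
  · intro hpI x hx
    by_cases hz : ∃ i, x i = 0
    · obtain ⟨i, hi0⟩ := hz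
      refine ⟨if i = 0 then 1 else 0, ?_⟩
      have hne : i ≠ (if i = 0 then 1 else 0 : Fin (n + 1)) := by
        split
        · subst ‹i = 0›
          intro h
          have h01 : ((0 : Fin (n + 1)) : ℕ) = ((1 : Fin (n + 1)) : ℕ) := by rw [h]
          rw [Fin.val_zero, Fin.val_one'] at h01
          rw [Nat.mod_eq_of_lt (by omega)] at h01
          omega
        · assumption
      have hmem : i ∈ Finset.univ.erase (if i = 0 then 1 else 0 : Fin (n + 1)) :=
        Finset.mem_erase.mpr ⟨hne, Finset.mem_univ _⟩
      rw [Finset.prod_eq_zero hmem hi0]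
      exact I.zero_mem
    · push_neg at hz
      have hne : ∏ i, x i ≠ 0 := Finset.prod_ne_zero_iff.mpr fun i _ => hz i
      obtain ⟨k, hk⟩ := FiniteMultiplicity.of_prime_left hprime hne
      exact absorbing_descent hp hpI (k + 1) x hx hk
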